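/- Let p_t be the periodic heat kernel on [−1,1]. For each t, δ > 0, sup_{x∈[−1,1]} ∫_{−1}^{1} |p_{t+δ}(x,w) − p_t(x,w)|² dw ≤ √(π/(2t)) · min(1, δ/(4t)). -/

import Mathlib

open Real MeasureTheory intervalIntegral

/-- The free-space heat kernel. -/
noncomputable def G (τ a : ℝ) : ℝ :=
  (Real.sqrt (4 * Real.pi * τ))⁻¹ * Real.exp (-a ^ 2 / (4 * τ))

/-- The periodic heat kernel on the torus `[-1,1]`. -/
noncomputable def p (t x y : ℝ) : ℝ := ∑' n : ℤ, G t (x - y + 2 * (n : ℝ))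

open Complex in
private lemma hk_summable_nat_exp {a : ℝ} (ha : 0 < a) :
    Summable fun k : ℕ => Real.exp (-a * ((k : ℝ)) ^ 2) := by
  refine Summable.of_nonneg_of_le (fun k => (Real.exp_pos _).le) (fun k => ?_)
    (summable_geometric_of_lt_one (Real.exp_pos (-a)).le (Real.exp_lt_one_iff.mpr (by linarith)))
  rw [← Real.exp_nat_mul]
  apply Real.exp_le_exp.mpr
  have hk : (k : ℝ) ≤ (k : ℝ) ^ 2 := by
    rcases Nat.eq_zero_or_pos k with h | h
    · simp [h]
    · have : (1 : ℝ) ≤ (k : ℝ) := by exact_mod_cast h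
      nlinarith
  nlinarith

private lemma hk_summable_int_exp {a : ℝ} (ha : 0 < a) :
    Summable fun n : ℤ => Real.exp (-a * ((n : ℝ)) ^ 2) := by
  refine Summable.of_nat_of_neg ((hk_summable_nat_exp ha).congr ?_)
    ((hk_summable_nat_exp ha).congr ?_) <;>
    · intro k; push_cast; ring_nf

private lemma hk_summable_nat_exp' {a : ℝ} (ha : 0 < a) :
    Summable fun k : ℕ => Real.exp (-a * ((k : ℝ) + 1) ^ 2) := by
  refine ((hk_summable_nat_exp ha).comp_injective (add_left_injective 1)).congr ?_
  intro k; simp [Function.comp]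

private lemma hk_sumbound {a : ℝ} (ha : 0 < a) :
    (∑' k : ℕ, Real.exp (-a * ((k : ℝ) + 1) ^ 2)) ≤ Real.sqrt (π / a) / 2 := by
  have hint : Integrable (fun x : ℝ => Real.exp (-a * x ^ 2)) := integrable_exp_neg_mul_sq ha
  refine Summable.tsum_le_of_sum_le (hk_summable_nat_exp' ha) (fun s => ?_)
  obtain ⟨N, hN⟩ := s.exists_nat_subset_range
  have h1 : ∑ k ∈ s, Real.exp (-a * ((k : ℝ) + 1) ^ 2)
      ≤ ∑ k ∈ Finset.range N, Real.exp (-a * ((k : ℝ) + 1) ^ 2) :=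
    Finset.sum_le_sum_of_subset_of_nonneg hN (fun _ _ _ => (Real.exp_pos _).le)
  have h2 : ∀ k : ℕ, Real.exp (-a * ((k : ℝ) + 1) ^ 2)
      ≤ ∫ x in (k : ℝ)..((k : ℝ) + 1), Real.exp (-a * x ^ 2) := by
    intro k
    have hc : (∫ x in (k : ℝ)..((k : ℝ) + 1), Real.exp (-a * ((k : ℝ) + 1) ^ 2))
        = Real.exp (-a * ((k : ℝ) + 1) ^ 2) := by simp
    rw [← hc]
    refine intervalIntegral.integral_mono_on (by linarith) intervalIntegrable_const
      hint.intervalIntegrable (fun x hx => ?_)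
    rw [Set.mem_Icc] at hx
    apply Real.exp_le_exp.mpr
    have hx0 : (0:ℝ) ≤ x := le_trans (Nat.cast_nonneg k) hx.1
    have hx2 : x ^ 2 ≤ ((k:ℝ) + 1) ^ 2 := pow_le_pow_left₀ hx0 hx.2 2
    nlinarith [hx2]
  have h3 : ∑ k ∈ Finset.range N, (∫ x in (k : ℝ)..((k : ℝ) + 1), Real.exp (-a * x ^ 2))
      = ∫ x in (0 : ℝ)..(N : ℝ), Real.exp (-a * x ^ 2) := by
    have := intervalIntegral.sum_integral_adjacent_intervals
      (a := fun i : ℕ => (i : ℝ)) (f := fun x => Real.exp (-a * x ^ 2)) (n := N)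
      (fun i _ => hint.intervalIntegrable)
    simpa using this
  have h4 : (∫ x in (0 : ℝ)..(N : ℝ), Real.exp (-a * x ^ 2))
      ≤ ∫ x in Set.Ioi (0:ℝ), Real.exp (-a * x ^ 2) := by
    rw [intervalIntegral.integral_of_le (by positivity)]
    refine setIntegral_mono_set hint.integrableOn
      (Filter.Eventually.of_forall (fun x => (Real.exp_pos _).le)) ?_
    exact Filter.Eventually.of_forall Set.Ioc_subset_Ioi_self
  calc ∑ k ∈ s, Real.exp (-a * ((k : ℝ) + 1) ^ 2)
      ≤ ∑ k ∈ Finset.range N, Real.exp (-a * ((k : ℝ) + 1) ^ 2) := h1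
    _ ≤ ∑ k ∈ Finset.range N, ∫ x in (k : ℝ)..((k : ℝ) + 1), Real.exp (-a * x ^ 2) :=
        Finset.sum_le_sum (fun k _ => h2 k)
    _ = ∫ x in (0 : ℝ)..(N : ℝ), Real.exp (-a * x ^ 2) := h3
    _ ≤ ∫ x in Set.Ioi (0:ℝ), Real.exp (-a * x ^ 2) := h4
    _ = Real.sqrt (π / a) / 2 := integral_gaussian_Ioi a

open Complex in
private lemma hk_poisson {t : ℝ} (ht : 0 < t) (u : ℝ) :
    ((∑' n : ℤ, G t (u + 2 * (n : ℝ)) : ℝ) : ℂ)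
      = (1/2) * ∑' n : ℤ, Complex.exp (-(π^2*t)*(n:ℂ)^2 + π*(n:ℂ)*(u:ℂ)*I) := by
  have hπ : (0:ℝ) < π := Real.pi_pos
  have hπC : ((π:ℝ):ℂ) ≠ 0 := by exact_mod_cast hπ.ne'
  have htC : ((t:ℝ):ℂ) ≠ 0 := by exact_mod_cast ht.ne'
  set a : ℂ := ((1/(π*t) : ℝ) : ℂ) with ha_def
  set b : ℂ := ((-u/(2*π*t) : ℝ) : ℂ) with hb_def
  have ha : 0 < a.re := by
    rw [ha_def, Complex.ofReal_re]; positivity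
  have key := Complex.tsum_exp_neg_quadratic ha b
  have hL : ∀ n : ℤ, Complex.exp (-(π:ℂ) * a * (n:ℂ)^2 + 2*(π:ℂ)*b*(n:ℂ))
      = Complex.exp (((-(n:ℝ)^2/t - u*n/t : ℝ)):ℂ) := by
    intro n
    congr 1
    rw [ha_def, hb_def]
    push_cast
    field_simp
    ring
  have e1 : ((∑' n : ℤ, G t (u + 2 * (n : ℝ)) : ℝ) : ℂ)
      = (((Real.sqrt (4*π*t))⁻¹ * Real.exp (-u^2/(4*t)) : ℝ) : ℂ)
        * ∑' n : ℤ, Complex.exp (-(π:ℂ) * a * (n:ℂ)^2 + 2*(π:ℂ)*b*(n:ℂ)) := by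
    rw [Complex.ofReal_tsum, ← tsum_mul_left]
    refine tsum_congr fun n => ?_
    rw [hL n, ← Complex.ofReal_exp, ← Complex.ofReal_mul]
    congr 1
    have hexp : -(u + 2*(n:ℝ))^2/(4*t) = -u^2/(4*t) + (-(n:ℝ)^2/t - u*(n:ℝ)/t) := by
      field_simp; ring
    rw [G, hexp, Real.exp_add]; ring
  have hR : ∀ n : ℤ, Complex.exp (-(π:ℂ)/a * ((n:ℂ) + I*b)^2)
      = Complex.exp (((u^2/(4*t) : ℝ)):ℂ)
        * Complex.exp (-(π^2*t)*(n:ℂ)^2 + π*(n:ℂ)*(u:ℂ)*I) := by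
    intro n
    rw [← Complex.exp_add]
    congr 1
    rw [ha_def, hb_def]
    push_cast
    field_simp
    ring_nf
    rw [Complex.I_sq]
    ring
  have e2 : (∑' n : ℤ, Complex.exp (-(π:ℂ)/a * ((n:ℂ) + I*b)^2))
      = Complex.exp (((u^2/(4*t) : ℝ)):ℂ)
        * ∑' n : ℤ, Complex.exp (-(π^2*t)*(n:ℂ)^2 + π*(n:ℂ)*(u:ℂ)*I) := by
    rw [← tsum_mul_left]
    exact tsum_congr hR
  have hs : Real.sqrt (π*t) ≠ 0 := by positivity
  have e3 : (1:ℂ) / a ^ (1/2 : ℂ) = ((Real.sqrt (π*t) : ℝ) : ℂ) := by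
    rw [ha_def]
    rw [show ((1:ℂ)/2) = (((1:ℝ)/2 : ℝ) : ℂ) by push_cast; ring]
    rw [← Complex.ofReal_cpow (by positivity)]
    rw [← Real.sqrt_eq_rpow]
    rw [show (1:ℝ)/(π*t) = (π*t)⁻¹ from one_div _, Real.sqrt_inv, Complex.ofReal_inv, one_div,
      inv_inv]
  rw [e1, key, e2, e3]
  rw [← mul_assoc, ← mul_assoc]
  congr 1
  rw [← Complex.ofReal_exp, ← Complex.ofReal_mul, ← Complex.ofReal_mul]
  have h4 : Real.sqrt (4*π*t) = 2 * Real.sqrt (π*t) := by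
    rw [show (4:ℝ)*π*t = 2^2*(π*t) by ring, Real.sqrt_mul (by positivity),
      Real.sqrt_sq (by norm_num)]
  have hE : Real.exp (-u^2/(4*t)) * Real.exp (u^2/(4*t)) = 1 := by
    rw [← Real.exp_add, show -u^2/(4*t) + u^2/(4*t) = 0 by ring, Real.exp_zero]
  have hfin : (Real.sqrt (4*π*t))⁻¹ * Real.exp (-u^2/(4*t)) * Real.sqrt (π*t)
      * Real.exp (u^2/(4*t)) = 1/2 := by
    calc (Real.sqrt (4*π*t))⁻¹ * Real.exp (-u^2/(4*t)) * Real.sqrt (π*t) * Real.exp (u^2/(4*t))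
        = (2*Real.sqrt (π*t))⁻¹ * Real.sqrt (π*t)
            * (Real.exp (-u^2/(4*t)) * Real.exp (u^2/(4*t))) := by rw [h4]; ring
      _ = 1/2 := by
          rw [hE, mul_one, mul_inv, mul_assoc, inv_mul_cancel₀ hs, mul_one]; norm_num
  rw [hfin]; norm_num

open Complex in
private lemma hk_expint (k : ℤ) :
    (∫ u in (-1:ℝ)..1, Complex.exp (π*(k:ℂ)*(u:ℂ)*I)) = if k = 0 then 2 else 0 := by
  rcases eq_or_ne k 0 with hk | hk
  · simp [hk]
    norm_num
  · rw [if_neg hk]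
    have hc : (π:ℂ)*(k:ℂ)*I ≠ 0 := by
      simp [Complex.I_ne_zero, Real.pi_ne_zero, hk]
    have h1 : ∀ u : ℝ, (π:ℂ)*(k:ℂ)*(u:ℂ)*I = ((π:ℂ)*(k:ℂ)*I) * (u:ℂ) := fun u => by ring
    simp_rw [h1]
    rw [integral_exp_mul_complex hc]
    have h2 : Complex.exp ((π:ℂ)*(k:ℂ)*I * (1:ℝ)) = Complex.exp ((π:ℂ)*(k:ℂ)*I * ((-1:ℝ):ℂ)) := by
      rw [show ((π:ℂ)*(k:ℂ)*I * ((1:ℝ):ℂ)) = (π:ℂ)*(k:ℂ)*I * ((-1:ℝ):ℂ) + (k:ℂ) * (2*(π:ℂ)*I) by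
        push_cast; ring]
      rw [Complex.exp_add, Complex.exp_int_mul_two_pi_mul_I, mul_one]
    rw [h2, sub_self, zero_div]

open Complex in
private lemma hk_integral_tsum_bound {F : ℤ → ℝ → ℂ} {b : ℤ → ℝ}
    (hFm : ∀ n, AEStronglyMeasurable (F n) (volume.restrict (Set.Ioc (-1:ℝ) 1)))
    (hb : Summable b) (hFb : ∀ n u, ‖F n u‖ ≤ b n) :
    ∫ u in Set.Ioc (-1:ℝ) 1, ∑' n, F n u = ∑' n, ∫ u in Set.Ioc (-1:ℝ) 1, F n u := by
  refine integral_tsum hFm ?_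
  have hbn : ∀ n, 0 ≤ b n := fun n => le_trans (norm_nonneg _) (hFb n 0)
  have h1 : ∀ n : ℤ, (∫⁻ u in Set.Ioc (-1:ℝ) 1, ‖F n u‖₊) ≤ ENNReal.ofReal (b n * 2) := by
    intro n
    calc ∫⁻ u in Set.Ioc (-1:ℝ) 1, ‖F n u‖₊
        ≤ ∫⁻ _ in Set.Ioc (-1:ℝ) 1, ENNReal.ofReal (b n) := by
          refine lintegral_mono fun u => ?_
          rw [← ENNReal.ofReal_coe_nnreal, coe_nnnorm]
          exact ENNReal.ofReal_le_ofReal (hFb n u)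
      _ = ENNReal.ofReal (b n) * volume (Set.Ioc (-1:ℝ) 1) := setLIntegral_const _ _
      _ = ENNReal.ofReal (b n * 2) := by
          rw [Real.volume_Ioc, show (1:ℝ) - (-1) = 2 by norm_num,
            ← ENNReal.ofReal_mul (hbn n)]
  refine ne_top_of_le_ne_top ?_ (ENNReal.tsum_le_tsum h1)
  rw [← ENNReal.ofReal_tsum_of_nonneg (fun n => by nlinarith [hbn n]) (hb.mul_right 2)]
  exact ENNReal.ofReal_ne_top

open Complex in
private lemma hk_parseval {c : ℤ → ℝ} (hc : Summable fun n : ℤ => |c n|) :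
    (∫ u in (-1:ℝ)..1, (∑' n : ℤ, (c n : ℂ) * Complex.exp (π*(n:ℂ)*(u:ℂ)*I))^2)
      = 2 * ∑' n : ℤ, (c n : ℂ) * (c (-n) : ℂ) := by
  set S : ℝ → ℂ := fun u => ∑' n : ℤ, (c n : ℂ) * Complex.exp (π*(n:ℂ)*(u:ℂ)*I) with hS_def
  set C : ℝ := ∑' n : ℤ, |c n| with hC_def
  have hecont : ∀ n : ℤ, Continuous fun u : ℝ => Complex.exp (π*(n:ℂ)*(u:ℂ)*I) := by
    intro n
    exact Complex.continuous_exp.comp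
      (((continuous_const.mul Complex.continuous_ofReal).mul continuous_const))
  have hterm_cont : ∀ n : ℤ, Continuous fun u : ℝ => (c n : ℂ) * Complex.exp (π*(n:ℂ)*(u:ℂ)*I) :=
    fun n => continuous_const.mul (hecont n)
  have henorm : ∀ (n : ℤ) (u : ℝ), ‖Complex.exp (π*(n:ℂ)*(u:ℂ)*I)‖ = 1 := by
    intro n u
    rw [Complex.norm_exp]
    have : ((π:ℂ)*(n:ℂ)*(u:ℂ)*I).re = 0 := by simp
    rw [this, Real.exp_zero]
  have hnorm : ∀ (n : ℤ) (u : ℝ), ‖(c n : ℂ) * Complex.exp (π*(n:ℂ)*(u:ℂ)*I)‖ = |c n| := by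
    intro n u
    rw [norm_mul, henorm, mul_one, Complex.norm_real, Real.norm_eq_abs]
  have hS_cont : Continuous S :=
    continuous_tsum hterm_cont hc (fun n u => le_of_eq (hnorm n u))
  have hCnn : 0 ≤ C := tsum_nonneg (fun n => abs_nonneg _)
  have hSnorm : ∀ u, ‖S u‖ ≤ C := by
    intro u
    calc ‖S u‖ ≤ ∑' n : ℤ, ‖(c n : ℂ) * Complex.exp (π*(n:ℂ)*(u:ℂ)*I)‖ :=
          norm_tsum_le_tsum_norm (by simpa only [hnorm] using hc)
      _ = C := by rw [hC_def]; exact tsum_congr fun n => hnorm n u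
  have hle : (-1:ℝ) ≤ 1 := by norm_num
  have step1 : (∫ u in (-1:ℝ)..1, (S u)^2)
      = ∑' n : ℤ, ∫ u in (-1:ℝ)..1, ((c n : ℂ) * Complex.exp (π*(n:ℂ)*(u:ℂ)*I)) * S u := by
    rw [intervalIntegral.integral_of_le hle]
    have : ∀ u : ℝ, (S u)^2 = ∑' n : ℤ, ((c n : ℂ) * Complex.exp (π*(n:ℂ)*(u:ℂ)*I)) * S u := by
      intro u
      rw [pow_two, hS_def]
      exact (tsum_mul_right).symm
    simp_rw [this]
    rw [hk_integral_tsum_bound (F := fun n u => ((c n : ℂ) * Complex.exp (π*(n:ℂ)*(u:ℂ)*I)) * S u)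
      (b := fun n => |c n| * C)
      (fun n => (((hterm_cont n).mul hS_cont).aestronglyMeasurable).restrict)
      (hc.mul_right C)
      (fun n u => by
        rw [norm_mul, hnorm]
        exact mul_le_mul_of_nonneg_left (hSnorm u) (abs_nonneg _))]
    refine tsum_congr fun n => ?_
    rw [intervalIntegral.integral_of_le hle]
  have step2 : ∀ n : ℤ, (∫ u in (-1:ℝ)..1, ((c n : ℂ) * Complex.exp (π*(n:ℂ)*(u:ℂ)*I)) * S u)
      = (c n : ℂ) * (2 * (c (-n) : ℂ)) := by
    intro n
    have hexp : ∀ u : ℝ, (Complex.exp (π*(n:ℂ)*(u:ℂ)*I)) * S u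
        = ∑' m : ℤ, (c m : ℂ) * Complex.exp (π*((n+m : ℤ):ℂ)*(u:ℂ)*I) := by
      intro u
      rw [hS_def, ← tsum_mul_left]
      refine tsum_congr fun m => ?_
      rw [← mul_assoc, mul_comm (Complex.exp _) ((c m : ℂ)), mul_assoc, ← Complex.exp_add]
      congr 2
      push_cast
      ring
    have harr : ∀ u : ℝ, ((c n : ℂ) * Complex.exp (π*(n:ℂ)*(u:ℂ)*I)) * S u
        = (c n : ℂ) * ((Complex.exp (π*(n:ℂ)*(u:ℂ)*I)) * S u) := fun u => by ring
    simp_rw [harr, hexp]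
    rw [intervalIntegral.integral_const_mul, intervalIntegral.integral_of_le hle]
    rw [hk_integral_tsum_bound (F := fun m u => (c m : ℂ) * Complex.exp (π*((n+m : ℤ):ℂ)*(u:ℂ)*I))
      (b := fun m => |c m|)
      (fun m => ((continuous_const.mul (hecont (n+m))).aestronglyMeasurable).restrict)
      hc
      (fun m u => by rw [norm_mul, henorm, mul_one, Complex.norm_real, Real.norm_eq_abs])]
    congr 1
    have hone : ∀ m : ℤ,
        (∫ u in Set.Ioc (-1:ℝ) 1, (c m : ℂ) * Complex.exp (π*((n+m : ℤ):ℂ)*(u:ℂ)*I))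
        = (c m : ℂ) * (if n + m = 0 then 2 else 0) := by
      intro m
      rw [← intervalIntegral.integral_of_le hle, intervalIntegral.integral_const_mul, hk_expint]
    simp_rw [hone]
    rw [tsum_eq_single (-n) (fun m hm => by
      rw [if_neg (fun h => hm (by omega)), mul_zero])]
    rw [if_pos (by omega), mul_comm]
  calc (∫ u in (-1:ℝ)..1, (S u)^2)
      = ∑' n : ℤ, (c n : ℂ) * (2 * (c (-n) : ℂ)) := by rw [step1]; exact tsum_congr step2
    _ = ∑' n : ℤ, 2 * ((c n : ℂ) * (c (-n) : ℂ)) := tsum_congr fun n => by ring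
    _ = 2 * ∑' n : ℤ, (c n : ℂ) * (c (-n) : ℂ) := tsum_mul_left

private lemma hk_pt2 {A B r : ℝ} (hA : 0 < A) (hB : 0 < B) (hr : B ≤ A * r) :
    (Real.exp (-A) * Real.exp (-B) - Real.exp (-A))^2 ≤ r * Real.exp (-A) := by
  have he1 : 0 < Real.exp (-A) := Real.exp_pos _
  have heB : 0 < Real.exp (-B) := Real.exp_pos _
  have hrpos : 0 < r := by nlinarith
  have heB1 : Real.exp (-B) ≤ 1 := Real.exp_le_one_iff.mpr (by linarith)
  have h2 : 1 - Real.exp (-B) ≤ B := by nlinarith [Real.add_one_le_exp (-B)]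
  have h4 : Real.exp (-A) * A ≤ 1 := by
    have hAe : A ≤ Real.exp A := by nlinarith [Real.add_one_le_exp A]
    have hmul : Real.exp (-A) * A ≤ Real.exp (-A) * Real.exp A :=
      mul_le_mul_of_nonneg_left hAe he1.le
    rwa [← Real.exp_add, neg_add_cancel, Real.exp_zero] at hmul
  have hfac : (Real.exp (-A) * Real.exp (-B) - Real.exp (-A))^2
      = Real.exp (-A) * Real.exp (-A) * ((1 - Real.exp (-B)) * (1 - Real.exp (-B))) := by ring
  rw [hfac]
  have k3 : (1 - Real.exp (-B)) * (1 - Real.exp (-B)) ≤ B := by nlinarith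
  have k4 : Real.exp (-A) * Real.exp (-A) * ((1 - Real.exp (-B)) * (1 - Real.exp (-B)))
      ≤ Real.exp (-A) * (Real.exp (-A) * B) := by nlinarith [mul_pos he1 he1]
  have k5 : Real.exp (-A) * B ≤ r := by
    have h6 : Real.exp (-A) * B ≤ Real.exp (-A) * (A * r) :=
      mul_le_mul_of_nonneg_left hr he1.le
    nlinarith [h4]
  calc Real.exp (-A) * Real.exp (-A) * ((1 - Real.exp (-B)) * (1 - Real.exp (-B)))
      ≤ Real.exp (-A) * (Real.exp (-A) * B) := k4
    _ ≤ Real.exp (-A) * r := mul_le_mul_of_nonneg_left k5 he1.le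
    _ = r * Real.exp (-A) := by ring

theorem heat_kernel_time_increment_L2 (t δ : ℝ) (ht : 0 < t) (hδ : 0 < δ)
    (x : ℝ) (hx : x ∈ Set.Icc (-1 : ℝ) 1) :
    (∫ w in (-1 : ℝ)..1, (p (t + δ) x w - p t x w) ^ 2)
      ≤ Real.sqrt (Real.pi / (2 * t)) * min 1 (δ / (4 * t)) := by
  have hπ : (0:ℝ) < π := Real.pi_pos
  have hπ2t : (0:ℝ) < π^2*t := by positivity
  have htδ : (0:ℝ) < t + δ := by linarith
  set c : ℤ → ℝ :=
    fun n => Real.exp (-(π^2*(t+δ))*(n:ℝ)^2) - Real.exp (-(π^2*t)*(n:ℝ)^2) with hc_def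
  have hcabs : ∀ n : ℤ, |c n| ≤ Real.exp (-(π^2*t)*(n:ℝ)^2) := by
    intro n
    have hle : Real.exp (-(π^2*(t+δ))*(n:ℝ)^2) ≤ Real.exp (-(π^2*t)*(n:ℝ)^2) :=
      Real.exp_le_exp.mpr (by
        have h0 : (0:ℝ) ≤ π^2*δ*(n:ℝ)^2 := by positivity
        nlinarith [h0])
    have hcval : c n = Real.exp (-(π^2*(t+δ))*(n:ℝ)^2) - Real.exp (-(π^2*t)*(n:ℝ)^2) := rfl
    rw [hcval, abs_sub_comm, abs_of_nonneg (by linarith)]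
    have := Real.exp_pos (-(π^2*(t+δ))*(n:ℝ)^2)
    linarith
  have hc : Summable fun n : ℤ => |c n| :=
    Summable.of_nonneg_of_le (fun n => abs_nonneg _) hcabs (hk_summable_int_exp hπ2t)
  -- summability of the complex series
  have hsumC : ∀ s : ℝ, 0 < s → ∀ u : ℝ,
      Summable fun n : ℤ => Complex.exp (-(π^2*s)*(n:ℂ)^2 + π*(n:ℂ)*(u:ℂ)*Complex.I) := by
    intro s hs u
    apply Summable.of_norm
    have hnn : ∀ n : ℤ, ‖Complex.exp (-(↑π^2*(s:ℂ))*(n:ℂ)^2 + ↑π*(n:ℂ)*(u:ℂ)*Complex.I)‖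
        = Real.exp (-(π^2*s)*(n:ℝ)^2) := by
      intro n
      rw [show (-(↑π^2*(s:ℂ))*(n:ℂ)^2 + ↑π*(n:ℂ)*(u:ℂ)*Complex.I)
          = ((-(π^2*s)*(n:ℝ)^2 : ℝ) : ℂ) + ((π*n*u : ℝ):ℂ)*Complex.I by push_cast; ring]
      rw [Complex.norm_exp]
      congr 1
      rw [Complex.add_re, Complex.mul_I_re, Complex.ofReal_im, Complex.ofReal_re]
      norm_num
    exact ((hk_summable_int_exp (show (0:ℝ) < π^2*s by positivity)).congr
      (fun n => (hnn n).symm))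
  set S : ℝ → ℂ := fun u => ∑' n : ℤ, (c n : ℂ) * Complex.exp (π*(n:ℂ)*(u:ℂ)*Complex.I)
    with hS_def
  have hdiff : ∀ w : ℝ, ((p (t+δ) x w - p t x w : ℝ) : ℂ) = (1/2) * S (x - w) := by
    intro w
    rw [Complex.ofReal_sub, p, p, hk_poisson htδ (x - w), hk_poisson ht (x - w), ← mul_sub]
    congr 1
    have hSval : S (x - w)
        = ∑' n : ℤ, (c n : ℂ) * Complex.exp (π*(n:ℂ)*((x-w : ℝ):ℂ)*Complex.I) := rfl
    rw [hSval, ← Summable.tsum_sub (hsumC (t+δ) htδ (x-w)) (hsumC t ht (x-w))]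
    refine tsum_congr fun n => ?_
    rw [Complex.exp_add, Complex.exp_add, ← sub_mul]
    congr 1
    rw [hc_def, Complex.ofReal_sub, Complex.ofReal_exp, Complex.ofReal_exp]
    congr 2 <;> push_cast <;> ring
  -- identity for the squared L² norm
  have hper : Function.Periodic (fun u : ℝ => (S u)^2) 2 := by
    intro u
    simp only
    congr 1
    rw [hS_def]
    refine tsum_congr fun n => ?_
    congr 1
    rw [show (π:ℂ)*(n:ℂ)*((u+2:ℝ):ℂ)*Complex.I
        = (π:ℂ)*(n:ℂ)*((u:ℝ):ℂ)*Complex.I + (n:ℂ)*(2*(π:ℂ)*Complex.I) by push_cast; ring,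
      Complex.exp_add, Complex.exp_int_mul_two_pi_mul_I, mul_one]
  have hceven : ∀ n : ℤ, c (-n) = c n := by
    intro n; rw [hc_def]; push_cast; ring_nf
  have hV : ((∫ w in (-1:ℝ)..1, (p (t+δ) x w - p t x w)^2 : ℝ) : ℂ)
      = (((1/2) * ∑' n : ℤ, (c n)^2 : ℝ) : ℂ) := by
    have hP := hk_parseval hc
    calc ((∫ w in (-1:ℝ)..1, (p (t+δ) x w - p t x w)^2 : ℝ) : ℂ)
        = ∫ w in (-1:ℝ)..1, (((p (t+δ) x w - p t x w)^2 : ℝ) : ℂ) :=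
          (RCLike.intervalIntegral_ofReal (𝕜 := ℂ)).symm
      _ = ∫ w in (-1:ℝ)..1, ((1/2) * S (x - w))^2 := by
          refine intervalIntegral.integral_congr fun w _ => ?_
          rw [Complex.ofReal_pow, hdiff w]
      _ = (1/4) * ∫ w in (-1:ℝ)..1, (S (x - w))^2 := by
          rw [← intervalIntegral.integral_const_mul]
          refine intervalIntegral.integral_congr fun w _ => by ring
      _ = (1/4) * ∫ u in (-1:ℝ)..1, (S u)^2 := by
          congr 1
          rw [intervalIntegral.integral_comp_sub_left (fun u => (S u)^2) x]
          have h2 := hper.intervalIntegral_add_eq (x - 1) (-1)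
          rw [show x - 1 + 2 = x - -1 by ring, show (-1:ℝ) + 2 = 1 by ring] at h2
          exact h2
      _ = (1/4) * (2 * ∑' n : ℤ, (c n : ℂ) * (c (-n) : ℂ)) := by
          simp only [hS_def]
          rw [hP]
      _ = (((1/2) * ∑' n : ℤ, (c n)^2 : ℝ) : ℂ) := by
          have h1 : ∑' n : ℤ, (c n : ℂ) * (c (-n) : ℂ) = ((∑' n : ℤ, (c n)^2 : ℝ) : ℂ) := by
            rw [Complex.ofReal_tsum]
            refine tsum_congr fun n => ?_
            rw [hceven n]
            push_cast
            ring
          rw [h1]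
          push_cast
          ring
  have hVeq : (∫ w in (-1:ℝ)..1, (p (t+δ) x w - p t x w)^2)
      = (1/2) * ∑' n : ℤ, (c n)^2 := by exact_mod_cast hV
  -- pointwise and summability bounds
  have hexp_le_one : ∀ n : ℤ, Real.exp (-(π^2*t)*(n:ℝ)^2) ≤ 1 := by
    intro n
    apply Real.exp_le_one_iff.mpr
    have h0 : (0:ℝ) ≤ π^2*t*(n:ℝ)^2 := by positivity
    nlinarith [h0]
  have hcsq_bound : ∀ n : ℤ, (c n)^2 ≤ Real.exp (-(π^2*t)*(n:ℝ)^2) := by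
    intro n
    have h1 := hcabs n
    have h2 := hexp_le_one n
    nlinarith [abs_nonneg (c n), sq_abs (c n)]
  have hcast : ∀ k : ℕ, (((k:ℤ)+1 : ℤ):ℝ) = (k:ℝ)+1 := fun k => by push_cast; ring
  have hs1 : Summable fun k : ℕ => (c ((k:ℤ)+1))^2 := by
    refine Summable.of_nonneg_of_le (fun k => sq_nonneg _) (fun k => ?_)
      (hk_summable_nat_exp' hπ2t)
    have h := hcsq_bound ((k:ℤ)+1)
    rwa [hcast k] at h
  have hs2 : Summable fun k : ℕ => (c (-((k:ℤ)+1)))^2 := by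
    refine hs1.congr fun k => ?_
    rw [hceven ((k:ℤ)+1)]
  have hsplit : (∑' n : ℤ, (c n)^2) = 2 * ∑' k : ℕ, (c ((k:ℤ)+1))^2 := by
    have hsp := tsum_of_add_one_of_neg_add_one (f := fun n : ℤ => (c n)^2) hs1 hs2
    rw [hsp]
    have hc0 : c 0 = 0 := by simp [hc_def]
    have hneg : (∑' k : ℕ, (c (-((k:ℤ)+1)))^2) = ∑' k : ℕ, (c ((k:ℤ)+1))^2 :=
      tsum_congr fun k => by rw [hceven ((k:ℤ)+1)]
    rw [hc0, hneg]
    ring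
  -- branch 1
  have h2π2t : (0:ℝ) < 2*π^2*t := by positivity
  have hpt1 : ∀ k : ℕ, (c ((k:ℤ)+1))^2 ≤ Real.exp (-(2*π^2*t)*((k:ℝ)+1)^2) := by
    intro k
    have h := hcabs ((k:ℤ)+1)
    rw [hcast k] at h
    have hsq : (c ((k:ℤ)+1))^2 ≤ (Real.exp (-(π^2*t)*((k:ℝ)+1)^2))^2 := by
      nlinarith [abs_nonneg (c ((k:ℤ)+1)), sq_abs (c ((k:ℤ)+1))]
    refine le_trans hsq (le_of_eq ?_)
    rw [pow_two, ← Real.exp_add]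
    congr 1
    ring
  have hB1 : (∑' k : ℕ, (c ((k:ℤ)+1))^2) ≤ Real.sqrt (π/(2*t)) := by
    have hc1 : (∑' k : ℕ, (c ((k:ℤ)+1))^2) ≤ ∑' k : ℕ, Real.exp (-(2*π^2*t)*((k:ℝ)+1)^2) :=
      Summable.tsum_le_tsum hpt1 hs1 (hk_summable_nat_exp' h2π2t)
    have hc2 := hk_sumbound h2π2t
    have harg : π/(2*π^2*t) ≤ π/(2*t) := by
      gcongr
      nlinarith [Real.pi_gt_three]
    have hc3 := Real.sqrt_le_sqrt harg
    have hc4 := Real.sqrt_nonneg (π/(2*π^2*t))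
    linarith
  -- branch 2
  have hpt2 : ∀ k : ℕ, (c ((k:ℤ)+1))^2 ≤ (δ/t) * Real.exp (-(π^2*t)*((k:ℝ)+1)^2) := by
    intro k
    have h0 : c ((k:ℤ)+1) = Real.exp (-(π^2*t*((k:ℝ)+1)^2)) * Real.exp (-(π^2*δ*((k:ℝ)+1)^2))
        - Real.exp (-(π^2*t*((k:ℝ)+1)^2)) := by
      have hrfl : c ((k:ℤ)+1) = Real.exp (-(π^2*(t+δ))*(((k:ℤ)+1 : ℤ):ℝ)^2)
          - Real.exp (-(π^2*t)*(((k:ℤ)+1 : ℤ):ℝ)^2) := rfl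
      rw [hrfl, hcast k, ← Real.exp_add]
      congr 2 <;> ring
    rw [h0, show -(π^2*t)*((k:ℝ)+1)^2 = -(π^2*t*((k:ℝ)+1)^2) by ring]
    refine hk_pt2 (by positivity) (by positivity) (le_of_eq ?_)
    field_simp
  have hB2 : (∑' k : ℕ, (c ((k:ℤ)+1))^2) ≤ Real.sqrt (π/(2*t)) * (δ/(4*t)) := by
    have hstep : (∑' k : ℕ, (c ((k:ℤ)+1))^2)
        ≤ (δ/t) * ∑' k : ℕ, Real.exp (-(π^2*t)*((k:ℝ)+1)^2) := by
      rw [← tsum_mul_left]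
      exact Summable.tsum_le_tsum hpt2 hs1 ((hk_summable_nat_exp' hπ2t).mul_left _)
    have hstep2 : (δ/t) * (∑' k : ℕ, Real.exp (-(π^2*t)*((k:ℝ)+1)^2))
        ≤ (δ/t) * (Real.sqrt (π/(π^2*t))/2) :=
      mul_le_mul_of_nonneg_left (hk_sumbound hπ2t) (by positivity)
    have hsd1 : Real.sqrt (π/(π^2*t)) = Real.sqrt (π/t) / π := by
      rw [show π/(π^2*t) = (π/t)/π^2 by rw [div_div, mul_comm t (π^2)]]
      rw [Real.sqrt_div (by positivity) (π^2), Real.sqrt_sq hπ.le]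
    have hsd2 : Real.sqrt (π/t) = Real.sqrt 2 * Real.sqrt (π/(2*t)) := by
      rw [← Real.sqrt_mul (by norm_num : (0:ℝ) ≤ 2)]
      congr 1
      field_simp
    have hsq2 : Real.sqrt 2 ≤ 1.5 := by
      have h225 : Real.sqrt 2.25 = 1.5 := by
        rw [show (2.25:ℝ) = 1.5^2 by norm_num, Real.sqrt_sq (by norm_num)]
      have hmono := Real.sqrt_le_sqrt (show (2:ℝ) ≤ 2.25 by norm_num)
      linarith
    have hπ3 := Real.pi_gt_three
    have hcoef : Real.sqrt 2 / (2*π) ≤ 1/4 := by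
      rw [div_le_div_iff₀ (by positivity) (by norm_num)]
      linarith [hsq2, hπ3]
    have hfin : (δ/t) * (Real.sqrt (π/(π^2*t))/2) ≤ Real.sqrt (π/(2*t)) * (δ/(4*t)) := by
      rw [hsd1, hsd2]
      have hnn : (0:ℝ) ≤ (δ/t) * Real.sqrt (π/(2*t)) := by positivity
      have hmono := mul_le_mul_of_nonneg_left hcoef hnn
      calc (δ/t) * ((Real.sqrt 2 * Real.sqrt (π/(2*t)) / π)/2)
          = ((δ/t) * Real.sqrt (π/(2*t))) * (Real.sqrt 2/(2*π)) := by ring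
        _ ≤ ((δ/t) * Real.sqrt (π/(2*t))) * (1/4) := hmono
        _ = Real.sqrt (π/(2*t)) * (δ/(4*t)) := by ring
    exact le_trans hstep (le_trans hstep2 hfin)
  -- conclusion
  rw [hVeq, hsplit, show (1:ℝ)/2 * (2 * ∑' k : ℕ, (c ((k:ℤ)+1))^2)
    = ∑' k : ℕ, (c ((k:ℤ)+1))^2 by ring]
  rw [mul_min_of_nonneg _ _ (Real.sqrt_nonneg _)]
  refine le_min ?_ ?_
  · rw [mul_one]
    exact hB1
  · exact hB2
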